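/- If R is a subalgebra of D(𝔥_reg)^W containing A_κ(W) such that the adjoint action of ℂ[∇] on R is locally nilpotent (for each r ∈ R there is n with ad(∇)^n(r) = 0), then R = A_κ(W). -/

import Mathlib

/-!
STATEMENT 14.  Let `ℓ ≥ 1`, let `W = ⟨s⟩` be the cyclic group of order `ℓ` acting on
`𝔥 = ℂ` by a primitive `ℓ`-th root of unity `ω`; then `𝔥_reg = ℂ∖{0}` and
`ℂ[𝔥_reg] = ℂ[x,x⁻¹]`.  For a parameter `κ = (κ_0,…,κ_{ℓ-1})` the spherical
subalgebra `A_κ(W)` of the rational Cherednik algebra, realised inside the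
`W`-invariant differential operators `D(𝔥_reg)^W` on `ℂ[x,x⁻¹]` via the Dunkl
embedding, is the subalgebra generated by `z = x^ℓ`, `eu = x∂x` and
`∇ = x^{-ℓ} ∏_{i=0}^{ℓ-1} (x∂x + ℓκ_i + i + ℓ(δ_{i,0}-1))`.

Theorem: if `R` is a subalgebra of `D(𝔥_reg)^W` containing `A_κ(W)` such that the
adjoint action of `ℂ[∇]` on `R` is locally nilpotent, then `R = A_κ(W)`.
-/

noncomputable section
open LaurentPolynomial

/-- The Laurent polynomial ring `ℂ[x,x⁻¹] = ℂ[𝔥_reg]`. -/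
abbrev LaurentC := LaurentPolynomial ℂ

/-- Multiplication operator. -/
def mulOpL (r : LaurentC) : Module.End ℂ LaurentC := LinearMap.mulLeft ℂ r

/-- Grothendieck's inductive order filtration on differential operators. -/
def diffOpOrder : ℕ → Set (Module.End ℂ LaurentC)
  | 0 => {D | ∀ r : LaurentC, D * mulOpL r = mulOpL r * D}
  | n + 1 => {D | ∀ r : LaurentC, D * mulOpL r - mulOpL r * D ∈ diffOpOrder n}

/-- The action of the generator `s` of `W = ℤ/ℓℤ` on `ℂ[x,x⁻¹]`: `x^n ↦ ω^n x^n`. -/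
def wAction (ω : ℂ) : Module.End ℂ LaurentC :=
  (AddMonoidAlgebra.coeffLinearEquiv ℂ).symm.toLinearMap ∘ₗ
    Finsupp.lsum ℂ (fun n : ℤ => ((ω ^ n)) • Finsupp.lsingle n) ∘ₗ
    (AddMonoidAlgebra.coeffLinearEquiv ℂ).toLinearMap

/-- The `W`-invariant differential operators `D(𝔥_reg)^W` on `ℂ[x,x⁻¹]`. -/
def DregW (ω : ℂ) : Set (Module.End ℂ LaurentC) :=
  {D | (∃ n, D ∈ diffOpOrder n) ∧ Commute (wAction ω) D}

/-- The Euler operator `eu = x ∂_x` on `ℂ[x,x⁻¹]`. -/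
def euler : Module.End ℂ LaurentC :=
  (AddMonoidAlgebra.coeffLinearEquiv ℂ).symm.toLinearMap ∘ₗ
    Finsupp.lsum ℂ (fun n : ℤ => ((n : ℂ)) • Finsupp.lsingle n) ∘ₗ
    (AddMonoidAlgebra.coeffLinearEquiv ℂ).toLinearMap

/-- `z = x^ℓ`, acting by multiplication. -/
def zOp (ℓ : ℕ) : Module.End ℂ LaurentC := mulOpL (T (ℓ : ℤ))

/-- The `i`-th factor `x∂x + ℓκ_i + i + ℓ(δ_{i,0} - 1)` of `∇`. -/
def nablaFactor (ℓ : ℕ) (κ : ℕ → ℂ) (i : ℕ) : Module.End ℂ LaurentC :=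
  euler + ((ℓ : ℂ) * κ i + (i : ℂ) + (ℓ : ℂ) * ((if i = 0 then 1 else 0) - 1)) • 1

/-- The operator `∇ = x^{-ℓ} ∏_{i=0}^{ℓ-1} (x∂x + ℓκ_i + i + ℓ(δ_{i,0}-1))`. -/
def nabla (ℓ : ℕ) (κ : ℕ → ℂ) : Module.End ℂ LaurentC :=
  mulOpL (T (-(ℓ : ℤ))) * ((List.range ℓ).map (nablaFactor ℓ κ)).prod

/-- The spherical subalgebra `A_κ(W) ⊆ D(𝔥_reg)^W`, realised via the Dunkl
embedding: the subalgebra generated by `z`, `eu` and `∇`. -/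
def Arank1 (ℓ : ℕ) (κ : ℕ → ℂ) : Subalgebra ℂ (Module.End ℂ LaurentC) :=
  Algebra.adjoin ℂ {zOp ℓ, euler, nabla ℓ κ}

namespace S14
open Polynomial

local notation "CC" => Polynomial.C
local notation "rm" => Polynomial.rootMultiplicity

abbrev M := Module.End ℂ LaurentC

lemma T_def (n : ℤ) : (T n : LaurentC) = AddMonoidAlgebra.single n 1 := rfl

lemma single_eq_smul_T (n : ℤ) (c : ℂ) : AddMonoidAlgebra.single n c = c • (T n : LaurentC) := by
  rw [T_def, AddMonoidAlgebra.smul_single, smul_eq_mul, mul_one]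

lemma end_ext {D E : M} (h : ∀ n : ℤ, D (T n) = E (T n)) : D = E := by
  refine AddMonoidAlgebra.lhom_ext' (fun n => LinearMap.ext_ring ?_)
  exact h n

def hOp (d : ℤ) (q : Polynomial ℂ) : M :=
  (AddMonoidAlgebra.coeffLinearEquiv ℂ).symm.toLinearMap ∘ₗ
    Finsupp.lsum ℂ (fun n : ℤ => (q.eval (n : ℂ)) • Finsupp.lsingle (n + d)) ∘ₗ
    (AddMonoidAlgebra.coeffLinearEquiv ℂ).toLinearMap

lemma hOp_T (d : ℤ) (q : Polynomial ℂ) (n : ℤ) :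
    hOp d q (T n) = q.eval (n : ℂ) • T (n + d) := by
  show (AddMonoidAlgebra.coeffLinearEquiv ℂ).symm (Finsupp.lsum ℂ
    (fun k : ℤ => (q.eval (k : ℂ)) • Finsupp.lsingle (M := ℂ) (R := ℂ) (k + d)) (Finsupp.single n (1:ℂ))) = _
  rw [Finsupp.lsum_single]; rfl

lemma euler_T (n : ℤ) : euler (T n) = (n : ℂ) • T n := by
  show (AddMonoidAlgebra.coeffLinearEquiv ℂ).symm (Finsupp.lsum ℂ
    (fun k : ℤ => ((k : ℂ)) • Finsupp.lsingle (M := ℂ) (R := ℂ) k) (Finsupp.single n (1:ℂ))) = _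
  rw [Finsupp.lsum_single]; rfl

lemma wAction_T (ω : ℂ) (n : ℤ) : wAction ω (T n) = (ω ^ n) • T n := by
  show (AddMonoidAlgebra.coeffLinearEquiv ℂ).symm (Finsupp.lsum ℂ
    (fun k : ℤ => ((ω ^ k)) • Finsupp.lsingle (M := ℂ) (R := ℂ) k) (Finsupp.single n (1:ℂ))) = _
  rw [Finsupp.lsum_single]; rfl

lemma hOp_mul (d e : ℤ) (q r : Polynomial ℂ) :
    hOp d q * hOp e r = hOp (d + e) (r * q.comp (X + CC (e : ℂ))) := by
  apply end_ext; intro n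
  rw [Module.End.mul_apply, hOp_T, map_smul, hOp_T, hOp_T, smul_smul]
  rw [eval_mul, eval_comp]
  have : ((n + e : ℤ) : ℂ) = (n : ℂ) + (e : ℂ) := by push_cast; ring
  rw [add_assoc, add_comm e d]
  simp [this, mul_comm]

lemma hOp_add (d : ℤ) (q r : Polynomial ℂ) : hOp d (q + r) = hOp d q + hOp d r := by
  apply end_ext; intro n
  simp [hOp_T, add_smul]

lemma hOp_sub (d : ℤ) (q r : Polynomial ℂ) : hOp d (q - r) = hOp d q - hOp d r := by
  apply end_ext; intro n
  simp [hOp_T, sub_smul]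

lemma hOp_smul (d : ℤ) (c : ℂ) (q : Polynomial ℂ) : hOp d (c • q) = c • hOp d q := by
  apply end_ext; intro n
  simp [hOp_T, smul_smul]

lemma hOp_zero (d : ℤ) : hOp d 0 = 0 := by
  apply end_ext; intro n; simp [hOp_T]

lemma hOp_one : hOp 0 1 = 1 := by
  apply end_ext; intro n; simp [hOp_T]

lemma mulOpL_T (s : ℤ) : mulOpL (T s) = hOp s 1 := by
  apply end_ext; intro n
  rw [mulOpL, LinearMap.mulLeft_apply, hOp_T, ← T_add]
  simp [add_comm]

lemma euler_eq : euler = hOp 0 X := by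
  apply end_ext; intro n
  simp [euler_T, hOp_T]

lemma T_ne_zero (n : ℤ) : (T n : LaurentC) ≠ 0 := by
  rw [T_def]
  exact fun h => one_ne_zero (α := ℂ) (AddMonoidAlgebra.single_eq_zero.mp h)

lemma poly_eval_int_zero {q : Polynomial ℂ} (h : ∀ n : ℤ, q.eval (n : ℂ) = 0) : q = 0 := by
  apply Polynomial.eq_zero_of_infinite_isRoot
  apply Set.infinite_of_injective_forall_mem (f := fun n : ℤ => (n : ℂ))
    (fun a b hab => Int.cast_injective hab)
  intro n
  exact h n

lemma hOp_inj {d : ℤ} {q : Polynomial ℂ} (h : hOp d q = 0) : q = 0 := by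
  apply poly_eval_int_zero
  intro n
  have h2 := congrArg (fun (D : M) => D (T n)) h
  simp only [hOp_T, LinearMap.zero_apply] at h2
  rcases smul_eq_zero.mp h2 with h' | h'
  · exact h'
  · exact absurd h' (T_ne_zero _)


section P3
variable (p : Polynomial ℂ) (ℓ : ℕ)

def PchG : ℕ → Polynomial ℂ
  | 0 => 1
  | j + 1 => p * (PchG j).comp (X - CC (ℓ : ℂ))

lemma comp_sub_comp_add (q : Polynomial ℂ) (s : ℂ) :
    (q.comp (X - CC s)).comp (X + CC s) = q := by
  rw [comp_assoc]
  simp [sub_comp, add_comp]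

lemma shift_ne_zero' {q : Polynomial ℂ} (hq : q ≠ 0) (s : ℂ) : q.comp (X - CC s) ≠ 0 := by
  intro h
  apply hq
  have h2 := congrArg (fun r => r.comp (X + CC s)) h
  simpa [comp_sub_comp_add] using h2

lemma dvd_comp_sub {u q : Polynomial ℂ} (s : ℂ) (h : u ∣ q) :
    u.comp (X - CC s) ∣ q.comp (X - CC s) := by
  obtain ⟨v, rfl⟩ := h
  exact ⟨v.comp (X - CC s), by rw [mul_comp]⟩

lemma rm_shift_le {q : Polynomial ℂ} (hq : q ≠ 0) (s α : ℂ) :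
    rm (α - s) q ≤ rm α (q.comp (X - CC s)) := by
  rw [le_rootMultiplicity_iff (shift_ne_zero' hq s)]
  have h2 := dvd_comp_sub s (pow_rootMultiplicity_dvd q (α - s))
  have h3 : ((X - CC (α - s)) ^ (rm (α - s) q)).comp (X - CC s)
      = (X - CC α) ^ (rm (α - s) q) := by
    rw [pow_comp, sub_comp, X_comp, C_comp]
    congr 1
    rw [map_sub]
    ring
  rwa [h3] at h2

lemma rm_comp (q : Polynomial ℂ) (hq : q ≠ 0) (s α : ℂ) :
    rm α (q.comp (X - CC s)) = rm (α - s) q := by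
  refine le_antisymm ?_ (rm_shift_le hq s α)
  have h := rm_shift_le (q := q.comp (X - CC s)) (shift_ne_zero' hq s) (-s) (α - s)
  have e1 : α - s - -s = α := by ring
  have e2 : (q.comp (X - CC s)).comp (X - CC (-s)) = q := by
    rw [map_neg, sub_neg_eq_add]
    exact comp_sub_comp_add q s
  rwa [e1, e2] at h

lemma PchG_ne_zero (hp : p ≠ 0) (j : ℕ) : PchG p ℓ j ≠ 0 := by
  induction j with
  | zero => simp [PchG]
  | succ k ih => exact mul_ne_zero hp (shift_ne_zero' ih _)

lemma rm_PchG_succ (hp : p ≠ 0) (j : ℕ) (α : ℂ) :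
    rm α (PchG p ℓ (j+1)) = rm α p + rm (α - ℓ) (PchG p ℓ j) := by
  rw [PchG, rootMultiplicity_mul
    (mul_ne_zero hp (shift_ne_zero' (PchG_ne_zero p ℓ hp j) _)),
    rm_comp _ (PchG_ne_zero p ℓ hp j)]

lemma rm_PchG_top (hp : p ≠ 0) (j : ℕ) (α : ℂ) :
    rm α (PchG p ℓ (j+1)) = rm α (PchG p ℓ j) + rm (α - (j*ℓ : ℕ)) p := by
  induction j generalizing α with
  | zero =>
      rw [rm_PchG_succ p ℓ hp]
      have h1 : rm (α - (0*ℓ:ℕ)) p = rm α p := by norm_num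
      have h0 : ∀ β, rm β (PchG p ℓ 0) = 0 := fun β =>
        Polynomial.rootMultiplicity_eq_zero (p := (1:Polynomial ℂ)) (by simp [IsRoot])
      rw [h1, h0, h0]
      omega
  | succ i ih =>
      rw [rm_PchG_succ p ℓ hp, ih (α - ℓ), rm_PchG_succ p ℓ hp]
      have e : α - ℓ - (i*ℓ : ℕ) = α - ((i+1)*ℓ : ℕ) := by push_cast; ring
      rw [e]
      ring

lemma rm_le_of_dvd' {u q : Polynomial ℂ} (hq : q ≠ 0) (h : u ∣ q) (α : ℂ) :
    rm α u ≤ rm α q :=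
  (le_rootMultiplicity_iff hq).mpr ((pow_rootMultiplicity_dvd u α).trans h)

lemma dvd_of_rm_le {u q : Polynomial ℂ} (hu : u ≠ 0) (hq : q ≠ 0)
    (h : ∀ α, rm α u ≤ rm α q) : u ∣ q := by
  classical
  refine (IsAlgClosed.splits u).dvd_of_roots_le_roots hu ?_
  refine Multiset.le_iff_count.mpr (fun a => ?_)
  rw [count_roots, count_roots]
  exact h a

lemma descent (hp : p ≠ 0) (j : ℕ) (q : Polynomial ℂ) (hq : q ≠ 0) (α : ℂ)
    (hdvd : PchG p ℓ (j+1) ∣ (q * p.comp (X - CC ((j*ℓ : ℕ) : ℂ)) - p * q.comp (X - CC (ℓ : ℂ))))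
    (h : rm α q < rm α (PchG p ℓ j)) :
    rm (α - ℓ) q < rm (α - ℓ) (PchG p ℓ j) := by
  set t1 := q * p.comp (X - CC ((j*ℓ : ℕ) : ℂ)) with ht1def
  set t2 := p * q.comp (X - CC (ℓ : ℂ)) with ht2def
  have ht1 : t1 ≠ 0 := mul_ne_zero hq (shift_ne_zero' hp _)
  have ht2 : t2 ≠ 0 := mul_ne_zero hp (shift_ne_zero' hq _)
  have hM : rm α t1 = rm α q + rm (α - (j*ℓ : ℕ)) p := by
    rw [ht1def, rootMultiplicity_mul (by rw [← ht1def]; exact ht1), rm_comp _ hp]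
  have hKgt : rm α t1 < rm α (PchG p ℓ (j+1)) := by
    rw [hM, rm_PchG_top p ℓ hp]
    omega
  have hdvdD : (X - CC α) ^ (rm α t1 + 1) ∣ (t1 - t2) :=
    dvd_trans (dvd_trans (pow_dvd_pow _ hKgt) (pow_rootMultiplicity_dvd _ α)) hdvd
  have hnt1 : ¬ (X - CC α) ^ (rm α t1 + 1) ∣ t1 := by
    intro hd
    have := (le_rootMultiplicity_iff ht1).mpr hd
    omega
  have h2 : rm α t2 ≤ rm α t1 := by
    by_contra hlt
    push_neg at hlt
    have hd2 : (X - CC α) ^ (rm α t1 + 1) ∣ t2 :=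
      dvd_trans (pow_dvd_pow _ hlt) (pow_rootMultiplicity_dvd _ _)
    apply hnt1
    have h3 : (X - CC α) ^ (rm α t1 + 1) ∣ (t1 - t2) + t2 := dvd_add hdvdD hd2
    simpa using h3
  have hN : rm α t2 = rm α p + rm (α - ℓ) q := by
    rw [ht2def, rootMultiplicity_mul (by rw [← ht2def]; exact ht2), rm_comp _ hq]
  have hfin : rm α p + rm (α - ℓ) q < rm α (PchG p ℓ (j+1)) := by
    rw [← hN]
    exact lt_of_le_of_lt h2 hKgt
  rw [rm_PchG_succ p ℓ hp] at hfin
  omega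

lemma key (hp : p ≠ 0) (hℓ : 1 ≤ ℓ) (j : ℕ) (q : Polynomial ℂ)
    (hdvd : PchG p ℓ (j+1) ∣ (q * p.comp (X - CC ((j*ℓ : ℕ) : ℂ)) - p * q.comp (X - CC (ℓ : ℂ)))) :
    PchG p ℓ j ∣ q := by
  by_cases hq : q = 0
  · simp [hq]
  refine dvd_of_rm_le (PchG_ne_zero p ℓ hp j) hq (fun α => ?_)
  by_contra hlt
  push_neg at hlt
  have hk : ∀ k : ℕ, rm (α - (k:ℂ)*(ℓ:ℂ)) q < rm (α - (k:ℂ)*(ℓ:ℂ)) (PchG p ℓ j) := by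
    intro k
    induction k with
    | zero => simpa using hlt
    | succ i ih =>
        have hstep := descent p ℓ hp j q hq (α - (i:ℂ)*(ℓ:ℂ)) hdvd ih
        have e : α - (i:ℂ)*(ℓ:ℂ) - ℓ = α - ((i+1:ℕ):ℂ)*(ℓ:ℂ) := by push_cast; ring
        rwa [e] at hstep
  have hfin : {x : ℂ | IsRoot (PchG p ℓ j) x}.Finite :=
    Polynomial.finite_setOf_isRoot (PchG_ne_zero p ℓ hp j)
  have hl : (ℓ:ℂ) ≠ 0 := Nat.cast_ne_zero.mpr (by omega)
  have hinj : Function.Injective (fun k : ℕ => α - (k:ℂ)*(ℓ:ℂ)) := by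
    intro a b hab
    simp only at hab
    have h3 : (a:ℂ)*(ℓ:ℂ) = (b:ℂ)*(ℓ:ℂ) := by
      have := sub_right_injective hab
      exact this
    have h4 : (a:ℂ) = (b:ℂ) := mul_right_cancel₀ hl h3
    exact_mod_cast h4
  have hfin2 : {k : ℕ | IsRoot (PchG p ℓ j) (α - (k:ℂ)*(ℓ:ℂ))}.Finite := by
    have he : {k : ℕ | IsRoot (PchG p ℓ j) (α - (k:ℂ)*(ℓ:ℂ))}
        = (fun k : ℕ => α - (k:ℂ)*(ℓ:ℂ)) ⁻¹' {x : ℂ | IsRoot (PchG p ℓ j) x} := rfl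
    rw [he]
    exact Set.Finite.preimage hinj.injOn hfin
  obtain ⟨b, hb⟩ := hfin2.bddAbove
  have hroot : ¬ IsRoot (PchG p ℓ j) (α - ((b+1:ℕ):ℂ)*(ℓ:ℂ)) := by
    intro hr
    have hle : b+1 ≤ b := hb hr
    omega
  have hcontr := hk (b+1)
  rw [Polynomial.rootMultiplicity_eq_zero hroot] at hcontr
  exact Nat.not_lt_zero _ hcontr

end P3

section P2
variable (ℓ : ℕ) (κ : ℕ → ℂ)

lemma hOp0_mul (q r : Polynomial ℂ) : hOp 0 q * hOp 0 r = hOp 0 (q * r) := by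
  rw [hOp_mul]
  norm_num [mul_comm]

lemma hOp_C (c : ℂ) : hOp 0 (CC c) = c • 1 := by
  have h : (CC c : Polynomial ℂ) = c • 1 := by rw [Polynomial.smul_eq_C_mul, mul_one]
  rw [h, hOp_smul, hOp_one]

/-- the polynomial symbol of `nabla` -/
def pP : Polynomial ℂ :=
  ((List.range ℓ).map
    (fun i => X + CC ((ℓ : ℂ) * κ i + (i : ℂ) + (ℓ : ℂ) * ((if i = 0 then 1 else 0) - 1)))).prod

lemma nablaFactor_eq (i : ℕ) :
    nablaFactor ℓ κ i
      = hOp 0 (X + CC ((ℓ : ℂ) * κ i + (i : ℂ) + (ℓ : ℂ) * ((if i = 0 then 1 else 0) - 1))) := by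
  rw [nablaFactor, hOp_add, ← euler_eq, hOp_C]

lemma list_prod_hOp0 (l : List (Polynomial ℂ)) :
    (l.map (hOp 0)).prod = hOp 0 l.prod := by
  induction l with
  | nil => simp [hOp_one]
  | cons a t ih => simp [List.map_cons, List.prod_cons, ih, hOp0_mul]

lemma nabla_eq : nabla ℓ κ = hOp (-(ℓ : ℤ)) (pP ℓ κ) := by
  have h1 : (List.range ℓ).map (nablaFactor ℓ κ)
      = ((List.range ℓ).map
        (fun i => X + CC ((ℓ : ℂ) * κ i + (i : ℂ) + (ℓ : ℂ) * ((if i = 0 then 1 else 0) - 1)))).map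
        (hOp 0) := by
    rw [List.map_map]
    exact List.map_congr_left (fun i _ => nablaFactor_eq ℓ κ i)
  rw [nabla, h1, list_prod_hOp0, mulOpL_T, hOp_mul]
  norm_num [pP]

lemma pP_ne_zero : pP ℓ κ ≠ 0 := by
  apply List.prod_ne_zero
  intro hx
  simp only [pP, List.mem_map] at hx
  obtain ⟨i, _, h⟩ := hx
  exact (Polynomial.monic_X_add_C _).ne_zero h

lemma zOp_pow (m : ℕ) : (zOp ℓ) ^ m = hOp ((m * ℓ : ℕ) : ℤ) 1 := by
  induction m with
  | zero => simpa using hOp_one.symm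
  | succ k ih =>
      rw [pow_succ, ih, zOp, mulOpL_T, hOp_mul]
      norm_num
      congr 1
      push_cast; ring

lemma nabla_pow (j : ℕ) : (nabla ℓ κ) ^ j = hOp (-(j * ℓ : ℕ)) (PchG (pP ℓ κ) ℓ j) := by
  induction j with
  | zero => simpa [PchG] using hOp_one.symm
  | succ k ih =>
      rw [pow_succ, ih, nabla_eq, hOp_mul]
      have h1 : (-((k * ℓ : ℕ) : ℤ)) + (-(ℓ : ℤ)) = (-(((k+1) * ℓ : ℕ) : ℤ)) := by push_cast; ring
      rw [h1]
      congr 1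
      have h2 : ((( -(ℓ:ℤ) : ℤ)) : ℂ) = -(ℓ : ℂ) := by push_cast; ring
      rw [h2, PchG]
      congr 2
      rw [map_neg, ← sub_eq_add_neg]

lemma hOp0_eq_aeval (q : Polynomial ℂ) : hOp 0 q = Polynomial.aeval euler q := by
  induction q using Polynomial.induction_on with
  | C c => rw [hOp_C]; simp [Algebra.algebraMap_eq_smul_one]
  | add p q hp hq => rw [hOp_add, hp, hq, map_add]
  | monomial n c ih =>
      have : CC c * X ^ (n + 1) = (CC c * X ^ n) * X := by ring
      rw [this, ← hOp0_mul, ih, ← euler_eq]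
      simp [map_mul]

lemma zOp_mem : zOp ℓ ∈ Arank1 ℓ κ :=
  Algebra.subset_adjoin (by simp)
lemma euler_mem : euler ∈ Arank1 ℓ κ :=
  Algebra.subset_adjoin (by simp)
lemma nabla_mem : nabla ℓ κ ∈ Arank1 ℓ κ :=
  Algebra.subset_adjoin (by simp)

lemma aeval_euler_mem (q : Polynomial ℂ) : Polynomial.aeval euler q ∈ Arank1 ℓ κ := by
  have h := Polynomial.aeval_mem_adjoin_singleton ℂ (x := euler) (p := q)
  exact Algebra.adjoin_mono (Set.singleton_subset_iff.mpr (by simp)) h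

lemma hOp_nonneg_mem (m : ℕ) (q : Polynomial ℂ) :
    hOp ((m * ℓ : ℕ) : ℤ) q ∈ Arank1 ℓ κ := by
  have h : hOp ((m * ℓ : ℕ) : ℤ) q = (zOp ℓ) ^ m * hOp 0 q := by
    rw [zOp_pow, hOp_mul]
    norm_num
  rw [h, hOp0_eq_aeval]
  exact mul_mem (pow_mem (zOp_mem ℓ κ) m) (aeval_euler_mem ℓ κ q)

lemma hOp_neg_mem (j : ℕ) (g : Polynomial ℂ) :
    hOp (-(j * ℓ : ℕ)) (PchG (pP ℓ κ) ℓ j * g) ∈ Arank1 ℓ κ := by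
  have h : hOp (-(j * ℓ : ℕ)) (PchG (pP ℓ κ) ℓ j * g) = (nabla ℓ κ) ^ j * hOp 0 g := by
    rw [nabla_pow, hOp_mul]
    norm_num [mul_comm]
  rw [h, hOp0_eq_aeval]
  exact mul_mem (pow_mem (nabla_mem ℓ κ) j) (aeval_euler_mem ℓ κ g)

end P2

section P4

lemma mulOpL_mul (a b : LaurentC) : mulOpL (a * b) = mulOpL a * mulOpL b := by
  apply LinearMap.ext; intro v
  simp [mulOpL, mul_assoc]

lemma mulOpL_one : mulOpL 1 = 1 := by
  apply LinearMap.ext; intro v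
  simp [mulOpL]

lemma mulOpL_add (a b : LaurentC) : mulOpL (a + b) = mulOpL a + mulOpL b := by
  apply LinearMap.ext; intro v
  simp [mulOpL, add_mul]

lemma mulOpL_smul (c : ℂ) (a : LaurentC) : mulOpL (c • a) = c • mulOpL a := by
  apply LinearMap.ext; intro v
  simp [mulOpL, smul_mul_assoc]

lemma mulOpL_pow (a : LaurentC) (k : ℕ) : mulOpL (a ^ k) = (mulOpL a) ^ k := by
  induction k with
  | zero => simpa using mulOpL_one
  | succ i ih => rw [pow_succ, pow_succ, mulOpL_mul, ih]

lemma order0_eq (D : M) (h : ∀ r : LaurentC, D * mulOpL r = mulOpL r * D) :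
    D = mulOpL (D 1) := by
  apply LinearMap.ext; intro r
  have h1 := congrArg (fun (E : M) => E 1) (h r)
  simp only [Module.End.mul_apply] at h1
  have h2 : mulOpL r 1 = r := by simp [mulOpL]
  rw [h2] at h1
  rw [h1]
  simp [mulOpL, mul_comm]

lemma mul_T_coeff (a : LaurentC) (n m : ℤ) : ((a * T n : LaurentC)).coeff m = a.coeff (m - n) := by
  have := AddMonoidAlgebra.coeff_mul_single_add a (1 : ℂ) n (m - n)
  rw [sub_add_cancel, mul_one] at this
  exact this

lemma sum_single_coeff (s : Finset ℤ) (c : ℤ → ℂ) (n e : ℤ) :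
    (∑ d ∈ s, AddMonoidAlgebra.single (n + d) (c d) : LaurentC).coeff (n + e)
      = if e ∈ s then c e else 0 := by
  classical
  rw [AddMonoidAlgebra.coeff_sum, Finsupp.finset_sum_apply]
  have h1 : ∀ d ∈ s, (AddMonoidAlgebra.single (n + d) (c d) : LaurentC).coeff (n + e)
      = if d = e then c d else 0 := by
    intro d _
    rw [AddMonoidAlgebra.coeff_single, Finsupp.single_apply]
    congr 1
    simp only [eq_iff_iff]
    omega
  rw [Finset.sum_congr rfl h1]
  rw [Finset.sum_ite_eq' s e c]

lemma mulOpL_decomp (a : LaurentC) :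
    mulOpL a = ∑ d ∈ a.coeff.support, hOp d (CC (a.coeff d)) := by
  apply end_ext; intro n
  have hR : (∑ d ∈ a.coeff.support, hOp d (CC (a.coeff d))) (T n)
      = ∑ d ∈ a.coeff.support, (AddMonoidAlgebra.single (n + d) (a.coeff d) : LaurentC) := by
    rw [LinearMap.sum_apply]
    refine Finset.sum_congr rfl (fun d _ => ?_)
    rw [hOp_T, eval_C, single_eq_smul_T]
  rw [hR]
  have hL : mulOpL a (T n) = a * T n := rfl
  rw [hL]
  apply AddMonoidAlgebra.ext
  apply Finsupp.ext
  intro m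
  have hLc : ((a * T n : LaurentC)).coeff m = a.coeff (m - n) := mul_T_coeff a n m
  rw [hLc]
  have hco : (∑ d ∈ a.coeff.support, (AddMonoidAlgebra.single (n + d) (a.coeff d) : LaurentC)).coeff m
      = (∑ d ∈ a.coeff.support, (AddMonoidAlgebra.single (n + d) (a.coeff d) : LaurentC)).coeff (n + (m - n)) := by
    congr 1; omega
  rw [hco, sum_single_coeff a.coeff.support (fun d => a.coeff d) n (m - n)]
  by_cases hm : (m - n) ∈ a.coeff.support
  · rw [if_pos hm]
  · rw [if_neg hm]
    exact Finsupp.notMem_support_iff.mp hm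

lemma exists_delta (q : Polynomial ℂ) : ∃ Q : Polynomial ℂ, Q.comp (X + CC 1) - Q = q := by
  classical
  suffices h : ∀ (n : ℕ) (q : Polynomial ℂ), q.natDegree ≤ n → ∃ Q, Q.comp (X + CC 1) - Q = q by
    exact h q.natDegree q le_rfl
  intro n
  induction n with
  | zero =>
      intro q hq
      refine ⟨CC (q.coeff 0) * X, ?_⟩
      conv_rhs => rw [Polynomial.eq_C_of_natDegree_le_zero hq]
      rw [mul_comp, C_comp, X_comp]
      rw [show (CC (q.coeff 0) * (X + CC 1) - CC (q.coeff 0) * X) = CC (q.coeff 0) * CC 1 by ring]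
      rw [Polynomial.C_1, mul_one]
  | succ n ih =>
      intro q hq
      set c := q.coeff (n+1) with hc
      set Rr : Polynomial ℂ := CC (c / (n+2)) * X^(n+2) with hRr
      set D := Rr.comp (X + CC 1) - Rr with hD
      have hDeq : D = CC (c / (n+2)) * ((X + 1)^(n+2) - X^(n+2)) := by
        rw [hD, hRr, mul_comp, C_comp, pow_comp, X_comp, mul_sub]
        norm_num
      have hcoeffD : ∀ m : ℕ, D.coeff m = (c / (n+2)) * ((n+2).choose m - if m = n+2 then 1 else 0) := by
        intro m
        rw [hDeq, coeff_C_mul, coeff_sub, coeff_X_add_one_pow, coeff_X_pow]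
      have hDdeg : D.natDegree ≤ n+1 := by
        rw [Polynomial.natDegree_le_iff_coeff_eq_zero]
        intro m hm
        rw [hcoeffD m]
        rcases Nat.lt_or_ge m (n+2) with h1 | h1
        · omega
        rcases Nat.eq_or_lt_of_le h1 with h2 | h2
        · rw [← h2]
          simp [Nat.choose_self, if_pos h2.symm]
        · rw [Nat.choose_eq_zero_of_lt h2, if_neg (by omega)]
          simp
      have hDc : D.coeff (n+1) = c := by
        rw [hcoeffD (n+1), if_neg (by omega), Nat.choose_succ_self_right]
        have h9 : ((n:ℂ) + 2) ≠ 0 := by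
          have h8 : (((n+2:ℕ)):ℂ) ≠ 0 := Nat.cast_ne_zero.mpr (by omega)
          push_cast at h8
          exact h8
        push_cast
        field_simp
        ring
      have hq' : (q - D).natDegree ≤ n := by
        rw [Polynomial.natDegree_le_iff_coeff_eq_zero]
        intro m hm
        rw [coeff_sub]
        rcases Nat.eq_or_lt_of_le (Nat.succ_le_of_lt hm) with h2 | h2
        · have h3 : m = n + 1 := by omega
          subst h3
          rw [hDc, hc, sub_self]
        · rw [Polynomial.coeff_eq_zero_of_natDegree_lt (lt_of_le_of_lt hq h2),
            Polynomial.coeff_eq_zero_of_natDegree_lt (lt_of_le_of_lt hDdeg h2), sub_self]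
      obtain ⟨Q', hQ'⟩ := ih (q - D) hq'
      refine ⟨Rr + Q', ?_⟩
      rw [add_comp]
      rw [show Rr.comp (X + CC 1) + Q'.comp (X + CC 1) - (Rr + Q')
        = (Rr.comp (X + CC 1) - Rr) + (Q'.comp (X + CC 1) - Q') by ring]
      rw [hQ', ← hD]
      ring

lemma comm_all (G : M) (h : G * mulOpL (T 1) = mulOpL (T 1) * G) (r : LaurentC) :
    G * mulOpL r = mulOpL r * G := by
  classical
  have hneg : G * mulOpL (T (-1)) = mulOpL (T (-1)) * G := by
    have h1 : mulOpL (T 1) * mulOpL (T (-1)) = 1 := by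
      rw [← mulOpL_mul, ← T_add]
      norm_num [mulOpL_one]
    have h2 : mulOpL (T (-1)) * mulOpL (T 1) = 1 := by
      rw [← mulOpL_mul, ← T_add]
      norm_num [mulOpL_one]
    calc G * mulOpL (T (-1))
        = mulOpL (T (-1)) * (mulOpL (T 1) * G) * mulOpL (T (-1)) := by
          rw [← mul_assoc, h2, one_mul]
      _ = mulOpL (T (-1)) * (G * mulOpL (T 1)) * mulOpL (T (-1)) := by rw [← h]
      _ = mulOpL (T (-1)) * G := by
          rw [mul_assoc, mul_assoc, h1, mul_one]
  have hTn : ∀ n : ℤ, G * mulOpL (T n) = mulOpL (T n) * G := by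
    intro n
    rcases Int.eq_nat_or_neg n with ⟨m, rfl | rfl⟩
    · have : (T (m : ℤ) : LaurentC) = (T 1) ^ m := by rw [T_pow]; norm_num
      rw [this, mulOpL_pow]
      exact (Commute.pow_right h m)
    · have : (T (-(m : ℤ)) : LaurentC) = (T (-1)) ^ m := by rw [T_pow]; norm_num
      rw [this, mulOpL_pow]
      exact (Commute.pow_right hneg m)
  induction r using AddMonoidAlgebra.induction with
  | zero =>
      have : mulOpL 0 = 0 := by apply LinearMap.ext; intro v; simp [mulOpL]
      rw [this, mul_zero, zero_mul]
  | single_add a b f _ _ ih =>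
      rw [mulOpL_add, mul_add, add_mul, ih]
      have hs : (AddMonoidAlgebra.single a b : LaurentC) = b • T a := single_eq_smul_T a b
      rw [hs, mulOpL_smul, mul_smul_comm, smul_mul_assoc, hTn a]

lemma sum_merge (s₁ s₂ : Finset ℤ) (f₁ f₂ : ℤ → Polynomial ℂ) :
    ∃ (s : Finset ℤ) (f : ℤ → Polynomial ℂ),
      (∑ d ∈ s₁, hOp d (f₁ d)) + (∑ d ∈ s₂, hOp d (f₂ d)) = ∑ d ∈ s, hOp d (f d) := by
  classical
  refine ⟨s₁ ∪ s₂, fun d => (if d ∈ s₁ then f₁ d else 0) + (if d ∈ s₂ then f₂ d else 0), ?_⟩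
  have key : ∀ (s' : Finset ℤ) (g : ℤ → Polynomial ℂ), s' ⊆ s₁ ∪ s₂ →
      (∑ d ∈ s₁ ∪ s₂, hOp d (if d ∈ s' then g d else 0)) = ∑ d ∈ s', hOp d (g d) := by
    intro s' g hsub
    rw [← Finset.sum_subset hsub (fun x _ hx => by rw [if_neg hx, hOp_zero])]
    exact Finset.sum_congr rfl (fun x hx => by rw [if_pos hx])
  have h1 : ∀ d, hOp d ((if d ∈ s₁ then f₁ d else 0) + (if d ∈ s₂ then f₂ d else 0))
      = hOp d (if d ∈ s₁ then f₁ d else 0) + hOp d (if d ∈ s₂ then f₂ d else 0) := by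
    intro d
    have := hOp_sub d ((if d ∈ s₁ then f₁ d else 0) + (if d ∈ s₂ then f₂ d else 0)) (if d ∈ s₂ then f₂ d else 0)
    have h2 : (if d ∈ s₁ then f₁ d else 0) + (if d ∈ s₂ then f₂ d else 0) - (if d ∈ s₂ then f₂ d else 0)
        = (if d ∈ s₁ then f₁ d else 0) := by ring
    rw [h2] at this
    rw [eq_sub_iff_add_eq] at this
    rw [← this]
  calc (∑ d ∈ s₁, hOp d (f₁ d)) + (∑ d ∈ s₂, hOp d (f₂ d))
      = (∑ d ∈ s₁ ∪ s₂, hOp d (if d ∈ s₁ then f₁ d else 0))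
        + (∑ d ∈ s₁ ∪ s₂, hOp d (if d ∈ s₂ then f₂ d else 0)) := by
        rw [key s₁ f₁ Finset.subset_union_left, key s₂ f₂ Finset.subset_union_right]
    _ = ∑ d ∈ s₁ ∪ s₂, (hOp d (if d ∈ s₁ then f₁ d else 0) + hOp d (if d ∈ s₂ then f₂ d else 0)) := by
        rw [Finset.sum_add_distrib]
    _ = _ := by
        exact Finset.sum_congr rfl (fun d _ => (h1 d).symm)

lemma order_decomp : ∀ (N : ℕ) (D : M), D ∈ diffOpOrder N →
    ∃ (s : Finset ℤ) (f : ℤ → Polynomial ℂ), D = ∑ d ∈ s, hOp d (f d) := by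
  intro N
  induction N with
  | zero =>
      intro D hD
      have h0 : ∀ r : LaurentC, D * mulOpL r = mulOpL r * D := hD
      refine ⟨(D 1).coeff.support, fun d => CC ((D 1).coeff d), ?_⟩
      have hdec := mulOpL_decomp (D 1)
      rw [← order0_eq D h0] at hdec
      exact hdec
  | succ N ih =>
      intro D hD
      have hE : D * mulOpL (T 1) - mulOpL (T 1) * D ∈ diffOpOrder N := hD (T 1)
      obtain ⟨s, f, hEf⟩ := ih _ hE
      choose Q hQ using fun e => exists_delta (f e)
      set F : M := ∑ e ∈ s, hOp (e-1) (Q e) with hFdef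
      have hFc : F * mulOpL (T 1) - mulOpL (T 1) * F = ∑ e ∈ s, hOp e (f e) := by
        rw [hFdef, mulOpL_T, Finset.sum_mul, Finset.mul_sum, ← Finset.sum_sub_distrib]
        refine Finset.sum_congr rfl (fun e _ => ?_)
        rw [hOp_mul, hOp_mul]
        have e1 : e - 1 + 1 = e := by ring
        have e2 : (1:ℤ) + (e - 1) = e := by ring
        have c1 : (((1:ℤ)):ℂ) = 1 := by norm_num
        have c2 : (((e - 1 : ℤ)):ℂ) = (e:ℂ) - 1 := by push_cast; ring
        rw [e1, e2, c1, one_mul, one_comp, mul_one, ← hOp_sub, hQ e]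
      have hG1 : (D - F) * mulOpL (T 1) = mulOpL (T 1) * (D - F) := by
        have heq : (D - F) * mulOpL (T 1) - mulOpL (T 1) * (D - F)
            = (D * mulOpL (T 1) - mulOpL (T 1) * D) - (F * mulOpL (T 1) - mulOpL (T 1) * F) := by
          simp only [sub_mul, mul_sub]
          abel
        rw [hFc, ← hEf, sub_self] at heq
        rw [sub_eq_zero] at heq
        exact heq
      have hGall : ∀ r, (D - F) * mulOpL r = mulOpL r * (D - F) := comm_all _ hG1
      have hGeq : D - F = mulOpL ((D - F) 1) := order0_eq _ hGall
      have hDeq : D = F + mulOpL ((D - F) 1) := by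
        rw [← hGeq]; abel
      have hFs : ∃ (s' : Finset ℤ) (f' : ℤ → Polynomial ℂ), F = ∑ d ∈ s', hOp d (f' d) := by
        classical
        refine ⟨s.image (fun e => e - 1), fun d => Q (d + 1), ?_⟩
        rw [hFdef, Finset.sum_image (by intro x _ y _ h; simpa using h)]
        exact Finset.sum_congr rfl (fun e _ => by simp)
      obtain ⟨s1, f1, hF1⟩ := hFs
      obtain ⟨sfin, ffin, hfin⟩ := sum_merge s1 ((D - F) 1).coeff.support f1 (fun d => CC (((D - F) 1).coeff d))
      rw [← hF1] at hfin
      refine ⟨sfin, ffin, ?_⟩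
      rw [hDeq, mulOpL_decomp ((D - F) 1)]
      exact hfin

end P4

section P5

lemma wAction_single (ω : ℂ) (k : ℤ) (c : ℂ) :
    wAction ω (AddMonoidAlgebra.single k c) = AddMonoidAlgebra.single k (ω ^ k * c) := by
  rw [single_eq_smul_T, map_smul, wAction_T, single_eq_smul_T, smul_smul, mul_comm]

lemma prune (ω : ℂ) (ℓ : ℕ) (hω : IsPrimitiveRoot ω ℓ) (hℓ : 1 ≤ ℓ) (D : M)
    (hcomm : Commute (wAction ω) D) (s : Finset ℤ) (f : ℤ → Polynomial ℂ)
    (hDf : D = ∑ d ∈ s, hOp d (f d)) (e : ℤ) (he : e ∈ s) (hne : ¬ ((ℓ:ℤ) ∣ e)) :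
    f e = 0 := by
  classical
  have hωne : ω ≠ 0 := hω.ne_zero (by omega)
  apply poly_eval_int_zero
  intro n
  have hDTn : D (T n) = ∑ d ∈ s, (AddMonoidAlgebra.single (n+d) ((f d).eval (n:ℂ)) : LaurentC) := by
    rw [hDf, LinearMap.sum_apply]
    exact Finset.sum_congr rfl fun d _ => by rw [hOp_T, single_eq_smul_T]
  have h1 : (wAction ω * D) (T n) = (D * wAction ω) (T n) := by rw [hcomm.eq]
  have hL : (wAction ω * D) (T n)
      = ∑ d ∈ s, (AddMonoidAlgebra.single (n+d) (ω^(n+d) * (f d).eval (n:ℂ)) : LaurentC) := by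
    rw [Module.End.mul_apply, hDTn, map_sum]
    exact Finset.sum_congr rfl fun d _ => wAction_single ω (n+d) _
  have hR : (D * wAction ω) (T n)
      = ∑ d ∈ s, (AddMonoidAlgebra.single (n+d) (ω^n * (f d).eval (n:ℂ)) : LaurentC) := by
    rw [Module.End.mul_apply, wAction_T, map_smul, hDTn, Finset.smul_sum]
    refine Finset.sum_congr rfl fun d _ => ?_
    rw [AddMonoidAlgebra.smul_single]
    rfl
  rw [hL, hR] at h1
  have h2 := congrArg (fun v : LaurentC => v.coeff (n+e)) h1
  rw [sum_single_coeff s (fun d => ω^(n+d) * (f d).eval (n:ℂ)) n e,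
    sum_single_coeff s (fun d => ω^n * (f d).eval (n:ℂ)) n e, if_pos he, if_pos he] at h2
  by_contra hv
  rw [zpow_add₀ hωne] at h2
  have h3 : ω^n * (ω^e * (f e).eval (n:ℂ)) = ω^n * (1 * (f e).eval (n:ℂ)) := by
    rw [mul_assoc] at h2
    rw [h2]
    ring
  have h4 := mul_left_cancel₀ (zpow_ne_zero n hωne) h3
  have h5 := mul_right_cancel₀ hv h4
  exact hne ((hω.zpow_eq_one_iff_dvd e).mp h5)

/-- ad(euler) minus a scalar, as a linear endomorphism of `M`. -/
def Phi (a : ℤ) : Module.End ℂ M :=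
  LinearMap.mulLeft ℂ euler - LinearMap.mulRight ℂ euler - (a:ℂ) • 1

lemma Phi_apply (a : ℤ) (D : M) : Phi a D = euler * D - D * euler - (a:ℂ) • D := rfl

lemma Phi_hOp (a e : ℤ) (q : Polynomial ℂ) :
    Phi a (hOp e q) = ((e:ℂ) - (a:ℂ)) • hOp e q := by
  rw [Phi_apply, euler_eq, hOp_mul 0 e X q, hOp_mul e 0 q X]
  have c0 : (((0:ℤ)):ℂ) = 0 := by norm_num
  simp only [c0, map_zero, add_zero, zero_add, comp_X, X_comp]
  rw [← hOp_smul, ← hOp_sub, ← hOp_sub, ← hOp_smul]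
  congr 1
  simp only [Polynomial.smul_eq_C_mul, map_sub]
  ring

def PhiL : List ℤ → M → M
  | [], D => D
  | a :: t, D => PhiL t (Phi a D)

lemma PhiL_mem (R : Subalgebra ℂ M) (heu : euler ∈ R) :
    ∀ (l : List ℤ) (D : M), D ∈ R → PhiL l D ∈ R := by
  intro l
  induction l with
  | nil => intro D hD; exact hD
  | cons a t ih =>
      intro D hD
      refine ih _ ?_
      rw [Phi_apply]
      exact sub_mem (sub_mem (mul_mem heu hD) (mul_mem hD heu)) (Subalgebra.smul_mem R hD _)

lemma PhiL_sum (l : List ℤ) (s : Finset ℤ) (F : ℤ → M) :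
    PhiL l (∑ d ∈ s, F d) = ∑ d ∈ s, PhiL l (F d) := by
  induction l generalizing F with
  | nil => rfl
  | cons a t ih =>
      show PhiL t (Phi a (∑ d ∈ s, F d)) = _
      rw [map_sum, ih]
      rfl

lemma PhiL_smul (l : List ℤ) (c : ℂ) (D : M) : PhiL l (c • D) = c • PhiL l D := by
  induction l generalizing D with
  | nil => rfl
  | cons a t ih =>
      show PhiL t (Phi a (c • D)) = _
      rw [map_smul, ih]
      rfl

lemma PhiL_hOp (l : List ℤ) (e : ℤ) (q : Polynomial ℂ) :
    PhiL l (hOp e q) = ((l.map (fun a : ℤ => (e:ℂ) - (a:ℂ))).prod) • hOp e q := by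
  induction l with
  | nil => simp [PhiL]
  | cons a t ih =>
      show PhiL t (Phi a (hOp e q)) = _
      rw [Phi_hOp, PhiL_smul, ih, smul_smul, List.map_cons, List.prod_cons]

lemma component_mem (R : Subalgebra ℂ M) (heu : euler ∈ R) (D : M) (hD : D ∈ R)
    (s : Finset ℤ) (f : ℤ → Polynomial ℂ) (hDf : D = ∑ d ∈ s, hOp d (f d))
    (d₀ : ℤ) (hd₀ : d₀ ∈ s) : hOp d₀ (f d₀) ∈ R := by
  classical
  set l := (s.erase d₀).toList with hl
  have hPl : PhiL l D ∈ R := PhiL_mem R heu l D hD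
  have hval : PhiL l D = ((l.map (fun a : ℤ => (d₀:ℂ) - (a:ℂ))).prod) • hOp d₀ (f d₀) := by
    rw [hDf, PhiL_sum]
    rw [Finset.sum_eq_single d₀ ?_ ?_]
    · exact PhiL_hOp l d₀ (f d₀)
    · intro d hds hne
      rw [PhiL_hOp]
      have hz : (0:ℂ) ∈ l.map (fun a : ℤ => (d:ℂ) - (a:ℂ)) := by
        refine List.mem_map.mpr ⟨d, ?_, by ring⟩
        rw [hl, Finset.mem_toList]
        exact Finset.mem_erase.mpr ⟨hne, hds⟩
      rw [List.prod_eq_zero hz, zero_smul]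
    · intro hko
      exact absurd hd₀ hko
  have hc : ((l.map (fun a : ℤ => (d₀:ℂ) - (a:ℂ))).prod) ≠ 0 := by
    apply List.prod_ne_zero
    intro h0
    obtain ⟨a, hal, ha0⟩ := List.mem_map.mp h0
    have : (d₀:ℂ) = (a:ℂ) := by linear_combination ha0
    have haz : a = d₀ := (Int.cast_injective this).symm
    rw [hl, Finset.mem_toList] at hal
    exact (Finset.mem_erase.mp hal).1 haz
  have hfin : hOp d₀ (f d₀)
      = ((l.map (fun a : ℤ => (d₀:ℂ) - (a:ℂ))).prod)⁻¹ • PhiL l D := by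
    rw [hval, smul_smul, inv_mul_cancel₀ hc, one_smul]
  rw [hfin]
  exact Subalgebra.smul_mem R hPl _

end P5

section P6
variable (ℓ : ℕ) (κ : ℕ → ℂ)

def Tst (d : ℤ) (q : Polynomial ℂ) : Polynomial ℂ :=
  q * (pP ℓ κ).comp (X + CC ((d : ℤ) : ℂ)) - (pP ℓ κ) * q.comp (X - CC ((ℓ : ℕ) : ℂ))

def Tchain : ℕ → ℤ → Polynomial ℂ → Polynomial ℂ
  | 0, _, q => q
  | n+1, d, q => Tchain n (d - ℓ) (Tst ℓ κ d q)

lemma adN_hOp (d : ℤ) (q : Polynomial ℂ) :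
    nabla ℓ κ * hOp d q - hOp d q * nabla ℓ κ = hOp (d - ℓ) (Tst ℓ κ d q) := by
  rw [nabla_eq, hOp_mul, hOp_mul]
  have e1 : -(ℓ:ℤ) + d = d - ℓ := by ring
  have e2 : d + -(ℓ:ℤ) = d - ℓ := by ring
  have e3 : X + CC (((-(ℓ:ℤ)) : ℤ) : ℂ) = X - CC ((ℓ:ℕ) : ℂ) := by
    have : (((-(ℓ:ℤ)) : ℤ) : ℂ) = -((ℓ:ℕ) : ℂ) := by push_cast; ring
    rw [this, map_neg, ← sub_eq_add_neg]
  rw [e1, e2, e3, ← hOp_sub]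
  rfl

lemma iter_adN (n : ℕ) : ∀ (d : ℤ) (q : Polynomial ℂ),
    (fun a => nabla ℓ κ * a - a * nabla ℓ κ)^[n] (hOp d q)
      = hOp (d - (n : ℤ) * ℓ) (Tchain ℓ κ n d q) := by
  induction n with
  | zero => intro d q; simp [Tchain]
  | succ k ih =>
      intro d q
      rw [Function.iterate_succ_apply]
      rw [show nabla ℓ κ * hOp d q - hOp d q * nabla ℓ κ
          = hOp (d - ℓ) (Tst ℓ κ d q) from adN_hOp ℓ κ d q, ih]
      have e : d - (ℓ:ℤ) - (k : ℤ) * ℓ = d - ((k+1 : ℕ) : ℤ) * ℓ := by push_cast; ring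
      rw [e]
      rfl

lemma chain_dvd (hℓ : 1 ≤ ℓ) (n : ℕ) : ∀ (j : ℕ) (q : Polynomial ℂ),
    Tchain ℓ κ n (-((j*ℓ : ℕ) : ℤ)) q = 0 → PchG (pP ℓ κ) ℓ j ∣ q := by
  induction n with
  | zero =>
      intro j q h
      rw [show Tchain ℓ κ 0 (-((j*ℓ : ℕ) : ℤ)) q = q from rfl] at h
      simp [h]
  | succ k ih =>
      intro j q h
      rw [show Tchain ℓ κ (k+1) (-((j*ℓ : ℕ) : ℤ)) q
          = Tchain ℓ κ k ((-((j*ℓ : ℕ) : ℤ)) - ℓ) (Tst ℓ κ (-((j*ℓ : ℕ) : ℤ)) q) from rfl] at h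
      have e : (-((j*ℓ : ℕ) : ℤ)) - ℓ = -(((j+1)*ℓ : ℕ) : ℤ) := by push_cast; ring
      rw [e] at h
      have hd := ih (j+1) _ h
      apply key (pP ℓ κ) ℓ (pP_ne_zero ℓ κ) hℓ j q
      have e2 : Tst ℓ κ (-((j*ℓ : ℕ) : ℤ)) q
          = q * (pP ℓ κ).comp (X - CC ((j*ℓ : ℕ) : ℂ)) - (pP ℓ κ) * q.comp (X - CC ((ℓ:ℕ) : ℂ)) := by
        rw [Tst]
        have e3 : X + CC (((-((j*ℓ:ℕ):ℤ)) : ℤ) : ℂ) = X - CC ((j*ℓ:ℕ) : ℂ) := by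
          have : (((-((j*ℓ:ℕ):ℤ)) : ℤ) : ℂ) = -((j*ℓ:ℕ) : ℂ) := by push_cast; ring
          rw [this, map_neg, ← sub_eq_add_neg]
        rw [e3]
      rw [← e2]
      exact hd

theorem main_thm
    (hℓ : 1 ≤ ℓ) (ω : ℂ) (hω : IsPrimitiveRoot ω ℓ)
    (R : Subalgebra ℂ (Module.End ℂ LaurentC))
    (hAR : Arank1 ℓ κ ≤ R)
    (hRD : (R : Set (Module.End ℂ LaurentC)) ⊆ DregW ω)
    (hnil : ∀ r ∈ R, ∃ n : ℕ,
      (fun a => nabla ℓ κ * a - a * nabla ℓ κ)^[n] r = 0) :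
    R = Arank1 ℓ κ := by
  classical
  refine le_antisymm (fun r hr => ?_) hAR
  obtain ⟨⟨N, hord⟩, hcomm⟩ := hRD hr
  obtain ⟨s, f, hdec⟩ := order_decomp N r hord
  set s' := s.filter (fun d => (ℓ:ℤ) ∣ d) with hs'
  have hdec' : r = ∑ d ∈ s', hOp d (f d) := by
    rw [hdec]
    symm
    apply Finset.sum_subset (Finset.filter_subset _ s)
    intro d hds hdns
    have hnd : ¬ ((ℓ:ℤ) ∣ d) := by
      intro hdvd
      exact hdns (Finset.mem_filter.mpr ⟨hds, hdvd⟩)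
    rw [prune ω ℓ hω hℓ r hcomm s f hdec d hds hnd, hOp_zero]
  rw [hdec']
  apply Subalgebra.sum_mem
  intro d hds'
  have hd_in_R : hOp d (f d) ∈ R :=
    component_mem R (hAR (euler_mem ℓ κ)) r hr s' f hdec' d hds'
  have hdvd : (ℓ:ℤ) ∣ d := (Finset.mem_filter.mp hds').2
  obtain ⟨m, hm⟩ := hdvd
  rcases le_or_gt 0 m with hmn | hmn
  · have hd2 : d = ((m.toNat * ℓ : ℕ) : ℤ) := by
      rw [hm]
      push_cast [Int.toNat_of_nonneg hmn]
      ring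
    have hmem := hOp_nonneg_mem ℓ κ m.toNat (f d)
    rwa [← hd2] at hmem
  · set j := (-m).toNat with hj
    have hjm : ((j : ℕ) : ℤ) = -m := Int.toNat_of_nonneg (by omega)
    have hd2 : d = -((j * ℓ : ℕ) : ℤ) := by
      rw [hm]
      have : ((j * ℓ : ℕ) : ℤ) = ((j:ℕ):ℤ) * (ℓ:ℤ) := by push_cast; ring
      rw [this, hjm]
      ring
    obtain ⟨n, hn⟩ := hnil _ hd_in_R
    rw [show hOp d (f d) = hOp (-((j * ℓ : ℕ) : ℤ)) (f d) by rw [← hd2]] at hn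
    rw [iter_adN] at hn
    have hq0 := hOp_inj hn
    have hdvd2 := chain_dvd ℓ κ hℓ n j (f d) hq0
    obtain ⟨g, hg⟩ := hdvd2
    have hmem := hOp_neg_mem ℓ κ j g
    rw [← hg] at hmem
    rwa [← hd2] at hmem

end P6

end S14

theorem rank_one_spherical_maximal
    (ℓ : ℕ) (hℓ : 1 ≤ ℓ) (ω : ℂ) (hω : IsPrimitiveRoot ω ℓ) (κ : ℕ → ℂ)
    (R : Subalgebra ℂ (Module.End ℂ LaurentC))
    (hAR : Arank1 ℓ κ ≤ R)
    (hRD : (R : Set (Module.End ℂ LaurentC)) ⊆ DregW ω)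
    (hnil : ∀ r ∈ R, ∃ n : ℕ,
      (fun a => nabla ℓ κ * a - a * nabla ℓ κ)^[n] r = 0) :
    R = Arank1 ℓ κ :=
  S14.main_thm ℓ κ hℓ ω hω R hAR hRD hnil

end
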